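/- Let $p(\cdot) \in \mathcal{P}$ with $p_+ < \infty$ and let $w$ be a weight with $w \in L^{p(\cdot)}_{loc}$. Then the continuous functions of compact support are dense in $L^{p(\cdot)}(w)$. -/

import Mathlib

open MeasureTheory Metric ENNReal Filter Topology

noncomputable section

abbrev Rn (n : ℕ) := EuclideanSpace ℝ (Fin n)

variable {n : ℕ}

/-- The variable Lebesgue (quasi-)norm of an `ℝ≥0∞`-valued function `f` with
exponent function `p` (values in `(0,∞]`), following the definition
`‖f‖ = inf { λ > 0 : ∫_{p≠∞} (f/λ)^{p(x)} dx + ‖f/λ‖_{L^∞({p=∞})} ≤ 1 }`. -/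
def vnorm (p : Rn n → ℝ≥0∞) (f : Rn n → ℝ≥0∞) : ℝ≥0∞ :=
  sInf {l : ℝ≥0∞ | 0 < l ∧
    (∫⁻ x in {x | p x ≠ ∞}, (f x / l) ^ (p x).toReal) +
      essSup (fun x => f x / l) (volume.restrict {x | p x = ∞}) ≤ 1}

/-- The pointwise conjugate exponent: `1/a + 1/a' = 1`, with `1' = ∞`, `∞' = 1`. -/
def econj (a : ℝ≥0∞) : ℝ≥0∞ := (1 - a⁻¹)⁻¹

/-- Variable exponent Muckenhoupt constant
`[w]_{A_{p(·)}} = sup_B |B|⁻¹ ‖w χ_B‖_{p(·)} ‖w⁻¹ χ_B‖_{p'(·)}`. -/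
def ApVarConst (p : Rn n → ℝ≥0∞) (w : Rn n → ℝ≥0∞) : ℝ≥0∞ :=
  ⨆ (c : Rn n) (r : ℝ) (_ : 0 < r),
    (volume (ball c r))⁻¹ * vnorm p ((ball c r).indicator w) *
      vnorm (fun x => econj (p x)) ((ball c r).indicator fun y => (w y)⁻¹)

/-- Classical Muckenhoupt `A_p` constant for `1 < p < ∞`:
`sup_B (|B|⁻¹∫_B w)(|B|⁻¹∫_B w^{1-p'})^{p-1}` with `p' = p/(p-1)`. -/
def ApConst (p : ℝ) (w : Rn n → ℝ≥0∞) : ℝ≥0∞ :=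
  ⨆ (c : Rn n) (r : ℝ) (_ : 0 < r),
    ((volume (ball c r))⁻¹ * ∫⁻ y in ball c r, w y) *
      (((volume (ball c r))⁻¹ * ∫⁻ y in ball c r, (w y) ^ (1 - p / (p - 1))) ^ (p - 1))

/-- The `A_1` constant `sup_B (|B|⁻¹∫_B w)/essinf_B w`. -/
def A1Const (w : Rn n → ℝ≥0∞) : ℝ≥0∞ :=
  ⨆ (c : Rn n) (r : ℝ) (_ : 0 < r),
    ((volume (ball c r))⁻¹ * ∫⁻ y in ball c r, w y) /
      essInf w (volume.restrict (ball c r))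

/-- `w ∈ A_p` for `1 ≤ p < ∞` (with the `A_1` condition when `p = 1`). -/
def IsAp (p : ℝ) (w : Rn n → ℝ≥0∞) : Prop :=
  if p = 1 then A1Const w < ∞ else ApConst p w < ∞

/-- `A_∞ = ⋃_{t>1} A_t`. -/
def IsAinf (w : Rn n → ℝ≥0∞) : Prop := ∃ t : ℝ, 1 < t ∧ ApConst t w < ∞

/-- The reverse Hölder constant `[w]_{RH_s} = sup_B (|B|⁻¹∫_B w^s)^{1/s}/(|B|⁻¹∫_B w)`. -/
def RHConst (s : ℝ) (w : Rn n → ℝ≥0∞) : ℝ≥0∞ :=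
  ⨆ (c : Rn n) (r : ℝ) (_ : 0 < r),
    (((volume (ball c r))⁻¹ * ∫⁻ y in ball c r, (w y) ^ s) ^ (1 / s)) /
      ((volume (ball c r))⁻¹ * ∫⁻ y in ball c r, w y)

/-- The `A_{p,q}` constant for `1 < p ≤ q < ∞`:
`sup_B (|B|⁻¹∫_B w^q)^{1/q} (|B|⁻¹∫_B w^{-p'})^{1/p'}`. -/
def ApqConst (p q : ℝ) (w : Rn n → ℝ≥0∞) : ℝ≥0∞ :=
  ⨆ (c : Rn n) (r : ℝ) (_ : 0 < r),
    (((volume (ball c r))⁻¹ * ∫⁻ y in ball c r, (w y) ^ q) ^ (1 / q)) *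
      (((volume (ball c r))⁻¹ * ∫⁻ y in ball c r, (w y) ^ (-(p / (p - 1)))) ^ (1 - 1 / p))

/-- `w ∈ A_{p,q}` for `1 ≤ p ≤ q`, with the `A_{1,q}` condition when `p = 1`. -/
def IsApq (p q : ℝ) (w : Rn n → ℝ≥0∞) : Prop :=
  if p = 1 then A1Const (fun x => (w x) ^ q) < ∞ else ApqConst p q w < ∞

/-- The variable exponent `A_{p(·),q(·)}` constant (with parameter `γ = 1/p - 1/q`):
`sup_B |B|^{γ-1} ‖w χ_B‖_{q(·)} ‖w⁻¹ χ_B‖_{p'(·)}`. -/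
def ApqVarConst (γ : ℝ) (p q : Rn n → ℝ≥0∞) (w : Rn n → ℝ≥0∞) : ℝ≥0∞ :=
  ⨆ (c : Rn n) (r : ℝ) (_ : 0 < r),
    (volume (ball c r)) ^ (γ - 1) * vnorm q ((ball c r).indicator w) *
      vnorm (fun x => econj (p x)) ((ball c r).indicator fun y => (w y)⁻¹)

/-- The Hardy–Littlewood maximal operator (over balls containing `x`). -/
def Mop (f : Rn n → ℝ≥0∞) (x : Rn n) : ℝ≥0∞ :=
  ⨆ (c : Rn n) (r : ℝ) (_ : 0 < r) (_ : x ∈ ball c r),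
    (volume (ball c r))⁻¹ * ∫⁻ y in ball c r, f y

/-- `M` is bounded on the weighted variable Lebesgue space `L^{p(·)}(w)`. -/
def MBddOn (p : Rn n → ℝ≥0∞) (w : Rn n → ℝ≥0∞) : Prop :=
  ∃ C : ℝ≥0∞, C < ∞ ∧ ∀ f : Rn n → ℝ≥0∞, Measurable f →
    vnorm p (fun x => Mop f x * w x) ≤ C * vnorm p (fun x => f x * w x)

/-- The Rubio de Francia iteration `R h = ∑_k M^k h / (2^k N^k)` where `N` bounds
the operator norm of `M`. -/
def RdF (N : ℝ≥0∞) (h : Rn n → ℝ≥0∞) (x : Rn n) : ℝ≥0∞ :=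
  ∑' k : ℕ, (Mop^[k] h) x / (2 ^ k * N ^ k)


lemma aux_mod_scale {α : Type*} [MeasurableSpace α] (μ : Measure α) (t : α → ℝ) (P : ℝ)
    (hP : 0 ≤ P) (ht : ∀ᵐ x ∂μ, 0 ≤ t x ∧ t x ≤ P) (c : ℝ≥0∞) (hc : c ≠ ∞) (h : α → ℝ≥0∞) :
    ∫⁻ x, (c * h x) ^ (t x) ∂μ ≤ (max c 1) ^ P * ∫⁻ x, (h x) ^ t x ∂μ := by
  have hfin : (max c 1 : ℝ≥0∞) ^ P ≠ ∞ := by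
    apply ENNReal.rpow_ne_top_of_nonneg hP
    simp [hc]
  calc ∫⁻ x, (c * h x) ^ (t x) ∂μ
      ≤ ∫⁻ x, (max c 1) ^ P * (h x) ^ t x ∂μ := by
        refine lintegral_mono_ae ?_
        filter_upwards [ht] with x ⟨ht0, htP⟩
        rw [ENNReal.mul_rpow_of_nonneg _ _ ht0]
        gcongr
        calc c ^ t x ≤ (max c 1) ^ t x := by gcongr; exact le_max_left _ _
          _ ≤ (max c 1) ^ P := ENNReal.rpow_le_rpow_of_exponent_le (le_max_right _ _) htP
    _ = (max c 1) ^ P * ∫⁻ x, (h x) ^ t x ∂μ := lintegral_const_mul' _ _ hfin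

lemma aux_rpow_add_le (A B : ℝ≥0∞) (t P : ℝ) (h0 : 0 ≤ t) (hP : t ≤ P) :
    (A + B) ^ t ≤ 2 ^ P * (A ^ t + B ^ t) := by
  have h1 : A + B ≤ 2 * max A B := by
    rcases le_total A B with h | h
    · calc A + B ≤ B + B := by gcongr
        _ = 2 * B := (two_mul B).symm
        _ ≤ 2 * max A B := by gcongr; exact le_max_right _ _
    · calc A + B ≤ A + A := by gcongr
        _ = 2 * A := (two_mul A).symm
        _ ≤ 2 * max A B := by gcongr; exact le_max_left _ _
  calc (A + B) ^ t ≤ (2 * max A B) ^ t := by gcongr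
    _ = 2 ^ t * (max A B) ^ t := ENNReal.mul_rpow_of_nonneg _ _ h0
    _ ≤ 2 ^ P * (A ^ t + B ^ t) := by
        refine mul_le_mul' (ENNReal.rpow_le_rpow_of_exponent_le (by norm_num) hP) ?_
        rcases le_total A B with h | h
        · rw [max_eq_right h]; exact le_add_self
        · rw [max_eq_left h]; exact le_self_add


/-- Continuous functions of compact support are dense in `L^{p(·)}(w)` when `p_+ < ∞`
and `w ∈ L^{p(·)}_{loc}`. -/
theorem continuousCompactSupport_dense {n : ℕ} (p : Rn n → ℝ≥0∞) (hpm : Measurable p)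
    (hp1 : ∀ x, 1 ≤ p x) (hpplus : essSup p (volume : Measure (Rn n)) < ∞)
    (w : Rn n → ℝ≥0∞) (hwm : Measurable w)
    (hw : ∀ᵐ x ∂(volume : Measure (Rn n)), 0 < w x ∧ w x < ∞)
    (hwloc : ∀ K : Set (Rn n), IsCompact K → vnorm p (K.indicator w) < ∞)
    (f : Rn n → ℝ) (hf : Measurable f)
    (hfLp : vnorm p (fun x => ENNReal.ofReal |f x| * w x) < ∞)
    (ε : ℝ≥0∞) (hε : 0 < ε) :
    ∃ g : Rn n → ℝ, Continuous g ∧ HasCompactSupport g ∧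
      vnorm p (fun x => ENNReal.ofReal |f x - g x| * w x) < ε := by
  classical
  set μ : Measure (Rn n) := volume.restrict {x | p x ≠ ∞} with hμdef
  -- nullity of {p = ∞}
  have hpae : ∀ᵐ x ∂(volume : Measure (Rn n)), p x < ∞ := ae_lt_of_essSup_lt hpplus
  have hpnull : (volume : Measure (Rn n)) {x | p x = ∞} = 0 := by
    have := ae_iff.mp hpae
    simpa [lt_top_iff_ne_top] using this
  -- exponent bounds
  set P : ℝ := (essSup p (volume : Measure (Rn n))).toReal with hPdef
  have hP0 : 0 ≤ P := ENNReal.toReal_nonneg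
  have htP : ∀ᵐ x ∂μ, 1 ≤ (p x).toReal ∧ (p x).toReal ≤ P := by
    have h1 : ∀ᵐ x ∂μ, p x ≤ essSup p (volume : Measure (Rn n)) :=
      ae_restrict_of_ae (ae_le_essSup p)
    have h2 : ∀ᵐ x ∂μ, p x ≠ ∞ :=
      ae_restrict_mem (μ := volume) (hpm (measurableSet_singleton ∞)).compl
    filter_upwards [h1, h2] with x hx1 hx2
    constructor
    · simpa using ENNReal.toReal_mono hx2 (hp1 x)
    · exact ENNReal.toReal_mono hpplus.ne hx1
  -- choice of the scale l
  set l : ℝ≥0∞ := min 1 (ε / 2) with hldef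
  have hl0 : 0 < l := lt_min one_pos (ENNReal.div_pos hε.ne' ENNReal.ofNat_ne_top)
  have hlε : l < ε := by
    rcases eq_or_ne ε ∞ with h | h
    · rw [h]; exact (min_le_left _ _).trans_lt (by norm_num)
    · exact (min_le_right _ _).trans_lt (ENNReal.half_lt_self hε.ne' h)
  have hlinv : l⁻¹ ≠ ∞ := ENNReal.inv_ne_top.mpr hl0.ne'
  -- vnorm ≤ l from modular bound
  have hvle : ∀ h : Rn n → ℝ≥0∞, (∫⁻ x, (h x / l) ^ (p x).toReal ∂μ) ≤ 1 → vnorm p h ≤ l := by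
    intro h hh
    apply sInf_le
    refine ⟨hl0, ?_⟩
    rw [Measure.restrict_eq_zero.mpr hpnull, essSup_measure_zero]
    simpa using hh
  -- extraction from vnorm < ∞
  have hext : ∀ h : Rn n → ℝ≥0∞, vnorm p h < ∞ →
      ∃ lam : ℝ≥0∞, 0 < lam ∧ lam ≠ ∞ ∧ (∫⁻ x, (h x / lam) ^ (p x).toReal ∂μ) ≤ 1 := by
    intro h hh
    rw [vnorm, sInf_lt_iff] at hh
    obtain ⟨b, ⟨hb0, hb1⟩, hbtop⟩ := hh
    exact ⟨b, hb0, hbtop.ne, le_trans le_self_add hb1⟩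
  -- finiteness of scaled modulars
  have hfinmod : ∀ (F : Rn n → ℝ≥0∞) (c lam : ℝ≥0∞), c ≠ ∞ → 0 < lam → lam ≠ ∞ →
      (∫⁻ x, (F x / lam) ^ (p x).toReal ∂μ) ≤ 1 →
      (∫⁻ x, (c * F x / l) ^ (p x).toReal ∂μ) ≠ ∞ := by
    intro F c lam hc hlam0 hlamt hmod
    have hkey : ∀ x, c * F x / l = (c * lam / l) * (F x / lam) := by
      intro x
      simp only [div_eq_mul_inv]
      calc c * F x * l⁻¹ = c * (lam * lam⁻¹) * F x * l⁻¹ := by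
            rw [ENNReal.mul_inv_cancel hlam0.ne' hlamt, mul_one]
        _ = c * lam * l⁻¹ * (F x * lam⁻¹) := by ring
    have hcfin : c * lam / l ≠ ∞ := by
      simp only [div_eq_mul_inv]
      exact ENNReal.mul_ne_top (ENNReal.mul_ne_top hc hlamt) hlinv
    have hbnd : (∫⁻ x, (c * F x / l) ^ (p x).toReal ∂μ) ≤ (max (c * lam / l) 1) ^ P * 1 := by
      calc (∫⁻ x, (c * F x / l) ^ (p x).toReal ∂μ)
          = ∫⁻ x, ((c * lam / l) * (F x / lam)) ^ (p x).toReal ∂μ := by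
            congr 1; funext x; rw [hkey]
        _ ≤ (max (c * lam / l) 1) ^ P * ∫⁻ x, (F x / lam) ^ (p x).toReal ∂μ := by
            refine aux_mod_scale μ _ P hP0 ?_ _ hcfin _
            filter_upwards [htP] with x ⟨h1, h2⟩
            exact ⟨le_trans zero_le_one h1, h2⟩
        _ ≤ (max (c * lam / l) 1) ^ P * 1 := by gcongr
    exact ne_top_of_le_ne_top (by rw [mul_one]; exact ENNReal.rpow_ne_top_of_nonneg hP0 (by simp [hcfin])) hbnd
  -- truncations
  set fN : ℕ → Rn n → ℝ := fun k x => if |f x| ≤ k ∧ ‖x‖ ≤ k then f x else 0 with hfNdef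
  have hfNmeas : ∀ k, Measurable (fN k) := by
    intro k
    refine Measurable.ite ?_ hf measurable_const
    have : {x : Rn n | |f x| ≤ (k : ℝ) ∧ ‖x‖ ≤ (k : ℝ)} =
        {x | |f x| ≤ (k : ℝ)} ∩ {x | ‖x‖ ≤ (k : ℝ)} := rfl
    rw [this]
    exact (measurableSet_le hf.abs measurable_const).inter
      (measurableSet_le measurable_norm measurable_const)
  have hfNabs : ∀ k x, |fN k x| ≤ k := by
    intro k x
    simp only [hfNdef]
    split_ifs with h
    · exact h.1
    · simp
  have hfNsub : ∀ k x, |f x - fN k x| ≤ |f x| := by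
    intro k x
    simp only [hfNdef]
    split_ifs with h
    · simp
    · simp
  -- measurability of the integrands
  have hmeas1 : ∀ (u : Rn n → ℝ), Measurable u →
      Measurable (fun x => (ENNReal.ofReal |u x| * w x / l) ^ (p x).toReal) := by
    intro u hu
    exact (((hu.abs.ennreal_ofReal.mul hwm).div measurable_const).pow hpm.ennreal_toReal)
  -- η
  set η : ℝ≥0∞ := (2 ^ P * 2)⁻¹ with hηdef
  have h2P : (2 : ℝ≥0∞) ^ P ≠ ∞ := ENNReal.rpow_ne_top_of_nonneg hP0 (by norm_num)
  have h2P0 : (2 : ℝ≥0∞) ^ P ≠ 0 := (ENNReal.rpow_pos (by norm_num) (by norm_num)).ne'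
  have hη0 : 0 < η := ENNReal.inv_pos.mpr (ENNReal.mul_ne_top h2P (by norm_num))
  -- Step A : truncation
  have hG1fin : (∫⁻ x, (ENNReal.ofReal |f x| * w x / l) ^ (p x).toReal ∂μ) ≠ ∞ := by
    obtain ⟨lam, h1, h2, h3⟩ := hext _ hfLp
    simpa using hfinmod (fun x => ENNReal.ofReal |f x| * w x) 1 lam (by norm_num) h1 h2 h3
  have hA : ∃ k : ℕ,
      (∫⁻ x, (ENNReal.ofReal |f x - fN k x| * w x / l) ^ (p x).toReal ∂μ) < η := by
    have hconv : Tendsto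
        (fun k => ∫⁻ x, (ENNReal.ofReal |f x - fN k x| * w x / l) ^ (p x).toReal ∂μ)
        atTop (𝓝 (∫⁻ _x, (0 : ℝ≥0∞) ∂μ)) := by
      refine tendsto_lintegral_of_dominated_convergence
        (bound := fun x => (ENNReal.ofReal |f x| * w x / l) ^ (p x).toReal)
        ?_ ?_ hG1fin ?_
      · intro k; exact hmeas1 _ (hf.sub (hfNmeas k))
      · intro k
        filter_upwards [htP] with x ⟨h1, _⟩
        refine ENNReal.rpow_le_rpow ?_ (by linarith)
        exact ENNReal.div_le_div_right
          (mul_le_mul_left (ENNReal.ofReal_le_ofReal (hfNsub k x)) (w x)) l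
      · filter_upwards [htP] with x ⟨h1, _⟩
        have hev : ∀ᶠ k : ℕ in atTop,
            (ENNReal.ofReal |f x - fN k x| * w x / l) ^ (p x).toReal = 0 := by
          filter_upwards [eventually_ge_atTop ⌈max |f x| ‖x‖⌉₊] with k hkx
          have hk1 : |f x| ≤ (k : ℝ) :=
            le_trans (le_trans (le_max_left _ _) (Nat.le_ceil _)) (Nat.cast_le.mpr hkx)
          have hk2 : ‖x‖ ≤ (k : ℝ) :=
            le_trans (le_trans (le_max_right _ _) (Nat.le_ceil _)) (Nat.cast_le.mpr hkx)
          have : fN k x = f x := by simp only [hfNdef]; rw [if_pos ⟨hk1, hk2⟩]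
          rw [this]
          simp only [sub_self, abs_zero, ENNReal.ofReal_zero, zero_mul, ENNReal.zero_div]
          exact ENNReal.zero_rpow_of_pos (by linarith)
        exact Tendsto.congr' (hev.mono fun k hk => hk.symm) tendsto_const_nhds
    rw [lintegral_zero] at hconv
    exact (hconv.eventually_lt_const hη0).exists
  obtain ⟨k, hk⟩ := hA
  -- Step B : continuous approximation of fN k
  -- integrability of fN k
  have hInt : Integrable (fN k) volume := by
    constructor
    · exact (hfNmeas k).aestronglyMeasurable
    · show (∫⁻ x, (‖fN k x‖₊ : ℝ≥0∞) ∂volume) < ∞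
      calc ∫⁻ x, (‖fN k x‖₊ : ℝ≥0∞) ∂volume
          ≤ ∫⁻ x, (closedBall (0 : Rn n) k).indicator (fun _ => (k : ℝ≥0∞)) x ∂volume := by
            apply lintegral_mono
            intro x
            by_cases hx : |f x| ≤ (k : ℝ) ∧ ‖x‖ ≤ (k : ℝ)
            · rw [Set.indicator_of_mem (by simpa [mem_closedBall_zero_iff] using hx.2)]
              show (‖fN k x‖₊ : ℝ≥0∞) ≤ (k : ℝ≥0∞)
              have : (‖fN k x‖₊ : ℝ≥0∞) = ENNReal.ofReal |fN k x| := by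
                rw [← Real.norm_eq_abs, ofReal_norm_eq_enorm, enorm_eq_nnnorm]
              rw [this]
              calc ENNReal.ofReal |fN k x| ≤ ENNReal.ofReal (k : ℝ) :=
                    ENNReal.ofReal_le_ofReal (hfNabs k x)
                _ = (k : ℝ≥0∞) := by simp
            · have : fN k x = 0 := by simp only [hfNdef]; rw [if_neg hx]
              simp [this]
        _ = (k : ℝ≥0∞) * volume (closedBall (0 : Rn n) k) :=
            lintegral_indicator_const measurableSet_closedBall _
        _ < ∞ := ENNReal.mul_lt_top (by simp) measure_closedBall_lt_top
  -- approximating sequence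
  have hexg : ∀ j : ℕ, ∃ g0 : Rn n → ℝ, HasCompactSupport g0 ∧
      (∫⁻ x, (‖fN k x - g0 x‖₊ : ℝ≥0∞) ∂volume) ≤ 2⁻¹ ^ j ∧ Continuous g0 ∧
      Integrable g0 volume :=
    fun j => hInt.exists_hasCompactSupport_lintegral_sub_le (pow_ne_zero j (by norm_num))
  choose g0 hg0supp hg0close hg0cont hg0int using hexg
  -- a.e. convergence of g0 to fN k
  have haesum : ∀ᵐ x ∂(volume : Measure (Rn n)),
      Tendsto (fun j => (‖fN k x - g0 j x‖₊ : ℝ≥0∞)) atTop (𝓝 0) := by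
    have hmeasj : ∀ j, Measurable fun x => (‖fN k x - g0 j x‖₊ : ℝ≥0∞) :=
      fun j => Measurable.enorm ((hfNmeas k).sub (hg0cont j).measurable)
    have hsum : (∫⁻ x, ∑' j, (‖fN k x - g0 j x‖₊ : ℝ≥0∞) ∂volume) ≠ ∞ := by
      rw [lintegral_tsum (fun j => (hmeasj j).aemeasurable)]
      refine ne_top_of_le_ne_top ?_ (ENNReal.tsum_le_tsum hg0close)
      rw [ENNReal.tsum_geometric]
      simp [ENNReal.one_sub_inv_two]
    filter_upwards [ae_lt_top (Measurable.ennreal_tsum hmeasj) hsum] with x hx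
    exact ENNReal.tendsto_atTop_zero_of_tsum_ne_top hx.ne
  -- cutoff function
  set B : Set (Rn n) := closedBall (0 : Rn n) ((k : ℝ) + 1) with hBdef
  obtain ⟨φ, hφ0, hφ1, hφ01⟩ := exists_continuous_zero_one_of_isClosed
    ((isOpen_ball : IsOpen (ball (0 : Rn n) ((k : ℝ) + 1))).isClosed_compl)
    (isClosed_closedBall : IsClosed (closedBall (0 : Rn n) (k : ℝ)))
    (disjoint_compl_left.mono_right (closedBall_subset_ball (lt_add_one _)))
  have hφB : ∀ x, x ∉ B → φ x = 0 := by
    intro x hx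
    exact hφ0 (fun hc => hx (ball_subset_closedBall hc))
  have hφcs : HasCompactSupport (⇑φ) := by
    apply HasCompactSupport.of_support_subset_isCompact (isCompact_closedBall (0 : Rn n) ((k:ℝ)+1))
    intro x hx
    by_contra hxB
    exact hx (hφB x hxB)
  -- truncation operator
  set T : ℝ → ℝ := fun a => max (-(k : ℝ)) (min (k : ℝ) a) with hTdef
  have hTcont : Continuous T := continuous_const.max (continuous_const.min continuous_id)
  have hTlip : ∀ a b : ℝ, |T a - T b| ≤ |a - b| := by
    intro a b
    have L : LipschitzWith 1 T := (LipschitzWith.id.const_min (k : ℝ)).const_max (-(k : ℝ))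
    simpa [Real.dist_eq] using L.dist_le_mul a b
  have hTid : ∀ a : ℝ, |a| ≤ (k : ℝ) → T a = a := by
    intro a ha
    rw [abs_le] at ha
    simp only [hTdef]
    rw [min_eq_right ha.2, max_eq_right ha.1]
  have hTabs : ∀ a : ℝ, |T a| ≤ (k : ℝ) := by
    intro a
    rw [abs_le]
    constructor
    · exact le_max_left _ _
    · exact max_le (neg_le_self (Nat.cast_nonneg k)) (min_le_left _ _)
  -- the candidate approximations
  set G : ℕ → Rn n → ℝ := fun j x => φ x * T (g0 j x) with hGdef
  have hGcont : ∀ j, Continuous (G j) := fun j => φ.continuous.mul (hTcont.comp (hg0cont j))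
  have hGcs : ∀ j, HasCompactSupport (G j) := fun j => hφcs.mul_right
  -- pointwise bounds
  have hb1 : ∀ j x, |fN k x - G j x| ≤ |fN k x - g0 j x| := by
    intro j x
    by_cases hx : x ∈ closedBall (0 : Rn n) (k : ℝ)
    · have hφx : φ x = 1 := hφ1 hx
      simp only [hGdef, hφx, one_mul]
      calc |fN k x - T (g0 j x)| = |T (fN k x) - T (g0 j x)| := by rw [hTid _ (hfNabs k x)]
        _ ≤ |fN k x - g0 j x| := hTlip _ _
    · have hfx : fN k x = 0 := by
        simp only [hfNdef]
        rw [if_neg]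
        rintro ⟨-, h2⟩
        exact hx (by simpa [mem_closedBall_zero_iff] using h2)
      simp only [hGdef, hfx, zero_sub, abs_neg]
      calc |φ x * T (g0 j x)| = φ x * |T (g0 j x)| := by
            rw [abs_mul, abs_of_nonneg (hφ01 x).1]
        _ ≤ 1 * |T (g0 j x)| := by
            exact mul_le_mul_of_nonneg_right (hφ01 x).2 (abs_nonneg _)
        _ = |T (0 : ℝ) - T (g0 j x)| := by
            rw [one_mul, hTid 0 (by simp), zero_sub, abs_neg]
        _ ≤ |(0 : ℝ) - g0 j x| := hTlip _ _
        _ = |g0 j x| := by rw [zero_sub, abs_neg]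
  have hb2a : ∀ j x, |fN k x - G j x| ≤ 2 * (k : ℝ) := by
    intro j x
    calc |fN k x - G j x| ≤ |fN k x| + |G j x| := by
          rw [sub_eq_add_neg]; exact (abs_add_le _ _).trans (by rw [abs_neg])
      _ ≤ (k : ℝ) + (k : ℝ) := by
          refine add_le_add (hfNabs k x) ?_
          simp only [hGdef]
          rw [abs_mul, abs_of_nonneg (hφ01 x).1]
          calc φ x * |T (g0 j x)| ≤ 1 * (k : ℝ) :=
                mul_le_mul (hφ01 x).2 (hTabs _) (abs_nonneg _) zero_le_one
            _ = (k : ℝ) := one_mul _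
      _ = 2 * (k : ℝ) := by ring
  have hb2b : ∀ j x, x ∉ B → fN k x - G j x = 0 := by
    intro j x hx
    have hfx : fN k x = 0 := by
      simp only [hfNdef]
      rw [if_neg]
      rintro ⟨-, h2⟩
      apply hx
      simp only [hBdef, mem_closedBall_zero_iff]
      linarith
    simp [hGdef, hfx, hφB x hx]
  -- finiteness of the dominating modular
  obtain ⟨lamK, hlamK0, hlamKt, hlamKmod⟩ := hext _ (hwloc B (isCompact_closedBall _ _))
  have hG2fin : (∫⁻ x, (ENNReal.ofReal (2 * (k : ℝ)) * B.indicator w x / l) ^ (p x).toReal ∂μ)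
      ≠ ∞ :=
    hfinmod (B.indicator w) (ENNReal.ofReal (2 * (k : ℝ))) lamK ENNReal.ofReal_ne_top
      hlamK0 hlamKt hlamKmod
  -- Step B: dominated convergence
  have hB : ∃ j : ℕ,
      (∫⁻ x, (ENNReal.ofReal |fN k x - G j x| * w x / l) ^ (p x).toReal ∂μ) < η := by
    have hconv : Tendsto
        (fun j => ∫⁻ x, (ENNReal.ofReal |fN k x - G j x| * w x / l) ^ (p x).toReal ∂μ)
        atTop (𝓝 (∫⁻ _x, (0 : ℝ≥0∞) ∂μ)) := by
      refine tendsto_lintegral_of_dominated_convergence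
        (bound := fun x => (ENNReal.ofReal (2 * (k : ℝ)) * B.indicator w x / l) ^ (p x).toReal)
        ?_ ?_ hG2fin ?_
      · intro j; exact hmeas1 _ ((hfNmeas k).sub (hGcont j).measurable)
      · intro j
        filter_upwards [htP] with x ⟨h1, _⟩
        refine ENNReal.rpow_le_rpow ?_ (by linarith)
        refine ENNReal.div_le_div_right ?_ l
        by_cases hx : x ∈ B
        · rw [Set.indicator_of_mem hx]
          exact mul_le_mul_left (ENNReal.ofReal_le_ofReal (hb2a j x)) (w x)
        · rw [hb2b j x hx]
          simp
      · filter_upwards [ae_restrict_of_ae haesum, ae_restrict_of_ae hw, htP]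
          with x hx1 hx2 ⟨ht1, _⟩
        -- real convergence
        have hreal : Tendsto (fun j => |fN k x - g0 j x|) atTop (𝓝 0) := by
          have h1 : Tendsto (fun j => (‖fN k x - g0 j x‖₊ : NNReal)) atTop (𝓝 0) :=
            ENNReal.tendsto_coe.mp (by simpa using hx1)
          have h2 := NNReal.tendsto_coe.mpr h1
          simpa [Real.norm_eq_abs] using h2
        have hsq : Tendsto (fun j => |fN k x - G j x|) atTop (𝓝 0) :=
          squeeze_zero (fun j => abs_nonneg _) (fun j => hb1 j x) hreal
        have h1 : Tendsto (fun j => ENNReal.ofReal |fN k x - G j x|) atTop (𝓝 0) := by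
          simpa using ENNReal.tendsto_ofReal hsq
        have hcne : w x / l ≠ ∞ := by
          rw [div_eq_mul_inv]
          exact ENNReal.mul_ne_top hx2.2.ne hlinv
        have h2 : Tendsto (fun j => ENNReal.ofReal |fN k x - G j x| * w x / l) atTop (𝓝 0) := by
          have := ENNReal.Tendsto.mul_const h1 (Or.inr hcne)
          simpa [mul_div_assoc] using this
        have h3 := ((ENNReal.continuous_rpow_const (y := (p x).toReal)).tendsto 0).comp h2
        simp only [Function.comp_def] at h3
        rw [ENNReal.zero_rpow_of_pos (by linarith)] at h3
        exact h3
    rw [lintegral_zero] at hconv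
    exact (hconv.eventually_lt_const hη0).exists
  obtain ⟨j, hj⟩ := hB
  -- final assembly
  refine ⟨G j, hGcont j, hGcs j, ?_⟩
  refine lt_of_le_of_lt (hvle _ ?_) hlε
  have hmeasA : Measurable (fun x => (ENNReal.ofReal |f x - fN k x| * w x / l) ^ (p x).toReal) :=
    hmeas1 _ (hf.sub (hfNmeas k))
  calc (∫⁻ x, ((fun x => ENNReal.ofReal |f x - G j x| * w x) x / l) ^ (p x).toReal ∂μ)
      ≤ ∫⁻ x, 2 ^ P * ((ENNReal.ofReal |f x - fN k x| * w x / l) ^ (p x).toReal +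
          (ENNReal.ofReal |fN k x - G j x| * w x / l) ^ (p x).toReal) ∂μ := by
        refine lintegral_mono_ae ?_
        filter_upwards [htP] with x ⟨h1, h2⟩
        have htri : ENNReal.ofReal |f x - G j x| * w x / l ≤
            ENNReal.ofReal |f x - fN k x| * w x / l +
            ENNReal.ofReal |fN k x - G j x| * w x / l := by
          rw [← ENNReal.add_div, ← add_mul, ← ENNReal.ofReal_add (abs_nonneg _) (abs_nonneg _)]
          refine ENNReal.div_le_div_right (mul_le_mul_left ?_ (w x)) l
          exact ENNReal.ofReal_le_ofReal (abs_sub_le _ _ _)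
        calc (ENNReal.ofReal |f x - G j x| * w x / l) ^ (p x).toReal
            ≤ (ENNReal.ofReal |f x - fN k x| * w x / l +
               ENNReal.ofReal |fN k x - G j x| * w x / l) ^ (p x).toReal :=
              ENNReal.rpow_le_rpow htri (by linarith)
          _ ≤ 2 ^ P * ((ENNReal.ofReal |f x - fN k x| * w x / l) ^ (p x).toReal +
               (ENNReal.ofReal |fN k x - G j x| * w x / l) ^ (p x).toReal) :=
              aux_rpow_add_le _ _ _ _ (by linarith) h2
    _ = 2 ^ P * ((∫⁻ x, (ENNReal.ofReal |f x - fN k x| * w x / l) ^ (p x).toReal ∂μ) +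
          ∫⁻ x, (ENNReal.ofReal |fN k x - G j x| * w x / l) ^ (p x).toReal ∂μ) := by
        rw [lintegral_const_mul' _ _ h2P, lintegral_add_left hmeasA]
    _ ≤ 2 ^ P * (η + η) := mul_le_mul' le_rfl (add_le_add hk.le hj.le)
    _ = 1 := by
        rw [hηdef, ← two_mul, ← mul_assoc]
        exact ENNReal.mul_inv_cancel (mul_ne_zero h2P0 two_ne_zero)
          (ENNReal.mul_ne_top h2P ENNReal.ofNat_ne_top)


end
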